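/- arXiv:0711.2123 — 4 statements merged into one kernel-verified Lean document; each statement's English description precedes it below -/
import Mathlib

section
/- For every real number s > 1 there exist constants 0 < c ≤ C (depending only on s) such that for every integer n ≥ 1: c·n^{2-2s} ≤ Σ_{N=n}^∞ Σ_{k=1}^∞ (N² + k²)^{-s} ≤ C·n^{2-2s}. -/
open Real Finset

lemma sumshift (a : ℕ) (p : ℝ) (hp : 1 < p) :
    Summable (fun j : ℕ => ((a : ℝ) + j) ^ (-p)) := by
  have h0 : Summable (fun m : ℕ => (m : ℝ) ^ (-p)) :=
    Real.summable_nat_rpow.2 (by linarith)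
  have := (summable_nat_add_iff a).2 h0
  refine this.congr fun j => ?_
  push_cast
  ring_nf

lemma tail_bound (p : ℝ) (hp : 1 < p) (n : ℕ) (hn : 1 ≤ n) :
    ∑' j : ℕ, ((n : ℝ) + j) ^ (-p) ≤ (1 + 1 / (p - 1)) * (n : ℝ) ^ (1 - p) := by
  have hn1 : (1 : ℝ) ≤ n := by exact_mod_cast hn
  have hn0 : (0 : ℝ) < n := by linarith
  rw [Summable.tsum_eq_zero_add (sumshift n p hp)]
  have h1 : ((n : ℝ) + (0 : ℕ)) ^ (-p) ≤ (n : ℝ) ^ (1 - p) := by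
    push_cast
    rw [add_zero]
    exact Real.rpow_le_rpow_of_exponent_le hn1 (by linarith)
  have h2 : ∑' j : ℕ, ((n : ℝ) + ((j : ℕ) + 1 : ℕ)) ^ (-p) ≤ (n : ℝ) ^ (1 - p) / (p - 1) := by
    apply Real.tsum_le_of_sum_range_le
    · intro j; positivity
    · intro m
      have hmono : AntitoneOn (fun x : ℝ => x ^ (-p)) (Set.Icc (n : ℝ) ((n : ℝ) + m)) := by
        intro x hx y hy hxy
        exact Real.rpow_le_rpow_of_nonpos (by linarith [hx.1]) hxy (by linarith)
      have := hmono.sum_le_integral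
      refine le_trans this ?_
      rw [integral_rpow (Or.inr ⟨fun h => by linarith,
        by intro h; rw [Set.mem_uIcc] at h; rcases h with h | h <;> nlinarith⟩)]
      have hne1 : -p + 1 ≠ 0 := by intro h; linarith
      have hne2 : p - 1 ≠ 0 := by intro h; linarith
      have heq : (((n : ℝ) + m) ^ (-p + 1) - (n : ℝ) ^ (-p + 1)) / (-p + 1)
          = ((n : ℝ) ^ (-p + 1) - ((n : ℝ) + m) ^ (-p + 1)) / (p - 1) := by
        field_simp
        ring
      rw [heq, show (1 - p) = (-p + 1) by ring]
      have hx : (0 : ℝ) ≤ ((n : ℝ) + m) ^ (-p + 1) := by positivity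
      have hp1 : (0 : ℝ) < p - 1 := by linarith
      gcongr
      linarith
  calc ((n : ℝ) + (0 : ℕ)) ^ (-p) + ∑' j : ℕ, ((n : ℝ) + ((j : ℕ) + 1 : ℕ)) ^ (-p)
      ≤ (n : ℝ) ^ (1 - p) + (n : ℝ) ^ (1 - p) / (p - 1) := add_le_add h1 h2
    _ = (1 + 1 / (p - 1)) * (n : ℝ) ^ (1 - p) := by ring

lemma sq_rpow_neg (x : ℝ) (hx : 0 < x) (t : ℝ) : (x ^ 2) ^ (-t) = x ^ (-(2 * t)) := by
  rw [← Real.rpow_natCast x 2, ← Real.rpow_mul hx.le]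
  norm_num

/-- For every real `s > 1` there exist constants `0 < c ≤ C` (depending only on `s`)
such that for every integer `n ≥ 1`:
`c·n^(2-2s) ≤ Σ_{N=n}^∞ Σ_{k=1}^∞ (N² + k²)^(-s) ≤ C·n^(2-2s)`.
Here `N ≥ n` is encoded as `N = n + j`, `j : ℕ`, and `k ≥ 1` as `k + 1`. -/
theorem stmt_2 (s : ℝ) (hs : 1 < s) :
    ∃ c C : ℝ, 0 < c ∧ c ≤ C ∧
      ∀ n : ℕ, 1 ≤ n →
        c * (n : ℝ) ^ (2 - 2 * s) ≤
            (∑' (j : ℕ), ∑' (k : ℕ),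
              (((n : ℝ) + j) ^ 2 + ((k : ℝ) + 1) ^ 2) ^ (-s)) ∧
          (∑' (j : ℕ), ∑' (k : ℕ),
              (((n : ℝ) + j) ^ 2 + ((k : ℝ) + 1) ^ 2) ^ (-s)) ≤
            C * (n : ℝ) ^ (2 - 2 * s) := by
  have h2s : 1 < 2 * s := by linarith
  have h2s1 : 1 < 2 * s - 1 := by linarith
  set c : ℝ := (5 : ℝ) ^ (-s) with hc
  set B : ℝ := (2 : ℝ) ^ s * (1 + 1 / (2 * s - 1)) with hB
  set C : ℝ := B * (1 + 1 / (2 * s - 1 - 1)) with hC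
  have hcpos : 0 < c := Real.rpow_pos_of_pos (by norm_num) _
  have h2spos : (0 : ℝ) < (2 : ℝ) ^ s := Real.rpow_pos_of_pos (by norm_num) _
  have h2sge1 : (1 : ℝ) ≤ (2 : ℝ) ^ s := Real.one_le_rpow (by norm_num) (by linarith)
  have hcle : c ≤ C := by
    have hc1 : c ≤ 1 := Real.rpow_le_one_of_one_le_of_nonpos (by norm_num) (by linarith)
    have h1 : (0 : ℝ) < 1 / (2 * s - 1) := by positivity
    have h2 : (0 : ℝ) < 1 / (2 * s - 1 - 1) := by
      apply div_pos one_pos; linarith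
    have f1 : (1 : ℝ) ≤ 1 + 1 / (2 * s - 1) := by linarith
    have f2 : (1 : ℝ) ≤ 1 + 1 / (2 * s - 1 - 1) := by linarith
    have hB1 : (1 : ℝ) ≤ B := by rw [hB]; nlinarith
    have hC1 : (1 : ℝ) ≤ C := by rw [hC]; nlinarith
    linarith
  refine ⟨c, C, hcpos, hcle, fun n hn => ?_⟩
  have hn1 : (1 : ℝ) ≤ (n : ℝ) := by exact_mod_cast hn
  have hn0 : (0 : ℝ) < n := by linarith
  set f : ℕ → ℕ → ℝ := fun j k => (((n : ℝ) + j) ^ 2 + ((k : ℝ) + 1) ^ 2) ^ (-s) with hf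
  have hf0 : ∀ j k, 0 ≤ f j k := fun j k => by positivity
  -- pointwise upper bound
  have hfle : ∀ j k, f j k ≤ (2 : ℝ) ^ s * (((n + j + 1 : ℕ) : ℝ) + k) ^ (-(2 * s)) := by
    intro j k
    have hxpos : (0 : ℝ) < (n : ℝ) + j + k + 1 := by positivity
    have hb : ((n : ℝ) + j + k + 1) ^ 2 / 2 ≤ ((n : ℝ) + j) ^ 2 + ((k : ℝ) + 1) ^ 2 := by
      nlinarith [sq_nonneg ((n : ℝ) + j - (k : ℝ) - 1)]
    have hbpos : (0 : ℝ) < ((n : ℝ) + j + k + 1) ^ 2 / 2 := by positivity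
    have h1 : f j k ≤ (((n : ℝ) + j + k + 1) ^ 2 / 2) ^ (-s) :=
      Real.rpow_le_rpow_of_nonpos hbpos hb (by linarith)
    have h2 : (((n : ℝ) + j + k + 1) ^ 2 / 2) ^ (-s)
        = (2 : ℝ) ^ s * (((n : ℝ) + j + k + 1) ^ 2) ^ (-s) := by
      rw [Real.div_rpow (by positivity) (by norm_num), Real.rpow_neg (by norm_num : (0:ℝ) ≤ 2)]
      field_simp
    have h3 : (((n : ℝ) + j + k + 1) ^ 2) ^ (-s) = (((n + j + 1 : ℕ) : ℝ) + k) ^ (-(2 * s)) := by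
      rw [sq_rpow_neg _ hxpos]
      congr 1
      push_cast
      ring
    rw [h2, h3] at h1
    exact h1
  -- summability of inner sums
  have hsumk : ∀ j, Summable (fun k => f j k) := by
    intro j
    exact Summable.of_nonneg_of_le (hf0 j) (hfle j)
      (((sumshift (n + j + 1) (2 * s) h2s)).mul_left _)
  -- inner sum bound
  have hinner : ∀ j : ℕ, ∑' k, f j k ≤ B * ((n : ℝ) + j) ^ (-(2 * s - 1)) := by
    intro j
    have step1 : ∑' k, f j k ≤ ∑' k : ℕ, (2 : ℝ) ^ s * (((n + j + 1 : ℕ) : ℝ) + k) ^ (-(2 * s)) :=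
      Summable.tsum_le_tsum (hfle j) (hsumk j) ((sumshift (n + j + 1) (2 * s) h2s).mul_left _)
    rw [tsum_mul_left] at step1
    have step2 := tail_bound (2 * s) h2s (n + j + 1) (by omega)
    have step3 : ((n + j + 1 : ℕ) : ℝ) ^ (1 - 2 * s) ≤ ((n : ℝ) + j) ^ (1 - 2 * s) := by
      apply Real.rpow_le_rpow_of_nonpos (by positivity) ?_ (by linarith)
      push_cast; linarith
    have heq : ((n : ℝ) + j) ^ (1 - 2 * s) = ((n : ℝ) + j) ^ (-(2 * s - 1)) := by
      congr 1; ring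
    rw [heq] at step3
    have h1s : (0 : ℝ) < 1 + 1 / (2 * s - 1) := by positivity
    calc ∑' k, f j k ≤ (2 : ℝ) ^ s * ∑' k : ℕ, (((n + j + 1 : ℕ) : ℝ) + k) ^ (-(2 * s)) := step1
      _ ≤ (2 : ℝ) ^ s * ((1 + 1 / (2 * s - 1)) * ((n + j + 1 : ℕ) : ℝ) ^ (1 - 2 * s)) := by
          apply mul_le_mul_of_nonneg_left _ h2spos.le
          simpa using step2
      _ ≤ (2 : ℝ) ^ s * ((1 + 1 / (2 * s - 1)) * ((n : ℝ) + j) ^ (-(2 * s - 1))) := by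
          apply mul_le_mul_of_nonneg_left _ h2spos.le
          exact mul_le_mul_of_nonneg_left step3 h1s.le
      _ = B * ((n : ℝ) + j) ^ (-(2 * s - 1)) := by rw [hB]; ring
  have hmaj : Summable (fun j : ℕ => B * ((n : ℝ) + j) ^ (-(2 * s - 1))) :=
    (sumshift n (2 * s - 1) h2s1).mul_left B
  have hsumj : Summable (fun j => ∑' k, f j k) :=
    Summable.of_nonneg_of_le (fun j => tsum_nonneg (hf0 j)) hinner hmaj
  constructor
  · -- lower bound
    have hpt : ∀ j ∈ range n, ∀ k ∈ range n,
        c * (n : ℝ) ^ (-(2 * s)) ≤ f j k := by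
      intro j hj k hk
      have hjn : (j : ℝ) ≤ (n : ℝ) - 1 := by
        have : (j : ℕ) + 1 ≤ n := mem_range.1 hj
        have := Nat.cast_le (α := ℝ) |>.2 this
        push_cast at this; linarith
      have hkn : (k : ℝ) ≤ (n : ℝ) - 1 := by
        have : (k : ℕ) + 1 ≤ n := mem_range.1 hk
        have := Nat.cast_le (α := ℝ) |>.2 this
        push_cast at this; linarith
      have hle5 : ((n : ℝ) + j) ^ 2 + ((k : ℝ) + 1) ^ 2 ≤ 5 * (n : ℝ) ^ 2 := by nlinarith
      have hpos : (0 : ℝ) < ((n : ℝ) + j) ^ 2 + ((k : ℝ) + 1) ^ 2 := by positivity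
      have h1 : (5 * (n : ℝ) ^ 2) ^ (-s) ≤ f j k :=
        Real.rpow_le_rpow_of_nonpos hpos hle5 (by linarith)
      have h2 : (5 * (n : ℝ) ^ 2) ^ (-s) = c * (n : ℝ) ^ (-(2 * s)) := by
        rw [Real.mul_rpow (by norm_num) (by positivity), sq_rpow_neg _ hn0]
      rw [← h2]
      exact h1
    have hinnerlow : ∀ j ∈ range n,
        (n : ℝ) * (c * (n : ℝ) ^ (-(2 * s))) ≤ ∑ k ∈ range n, f j k := by
      intro j hj
      have := Finset.card_nsmul_le_sum (range n) (fun k => f j k)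
        (c * (n : ℝ) ^ (-(2 * s))) (fun k hk => hpt j hj k hk)
      simpa [nsmul_eq_mul] using this
    have houterlow : (n : ℝ) * ((n : ℝ) * (c * (n : ℝ) ^ (-(2 * s))))
        ≤ ∑ j ∈ range n, ∑ k ∈ range n, f j k := by
      have := Finset.card_nsmul_le_sum (range n) (fun j => ∑ k ∈ range n, f j k)
        ((n : ℝ) * (c * (n : ℝ) ^ (-(2 * s)))) hinnerlow
      simpa [nsmul_eq_mul] using this
    have hchain : ∑ j ∈ range n, ∑ k ∈ range n, f j k ≤ ∑' j, ∑' k, f j k := by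
      calc ∑ j ∈ range n, ∑ k ∈ range n, f j k
          ≤ ∑ j ∈ range n, ∑' k, f j k :=
            Finset.sum_le_sum fun j _ => Summable.sum_le_tsum (range n) (fun k _ => hf0 j k) (hsumk j)
        _ ≤ ∑' j, ∑' k, f j k :=
            Summable.sum_le_tsum (range n) (fun j _ => tsum_nonneg (hf0 j)) hsumj
    have hexp : c * (n : ℝ) ^ (2 - 2 * s) = (n : ℝ) * ((n : ℝ) * (c * (n : ℝ) ^ (-(2 * s)))) := by
      rw [show (2 - 2 * s : ℝ) = 2 + -(2 * s) by ring, Real.rpow_add hn0,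
        show ((2 : ℝ)) = ((2 : ℕ) : ℝ) by norm_num, Real.rpow_natCast]
      ring
    rw [hexp]
    exact le_trans houterlow hchain
  · -- upper bound
    have step1 : ∑' j, ∑' k, f j k ≤ ∑' j : ℕ, B * ((n : ℝ) + j) ^ (-(2 * s - 1)) :=
      Summable.tsum_le_tsum hinner hsumj hmaj
    rw [tsum_mul_left] at step1
    have step2 := tail_bound (2 * s - 1) h2s1 n hn
    have hBpos : (0 : ℝ) < B := by positivity
    calc ∑' j, ∑' k, f j k
        ≤ B * ∑' j : ℕ, ((n : ℝ) + j) ^ (-(2 * s - 1)) := step1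
      _ ≤ B * ((1 + 1 / (2 * s - 1 - 1)) * (n : ℝ) ^ (1 - (2 * s - 1))) :=
          mul_le_mul_of_nonneg_left step2 hBpos.le
      _ = C * (n : ℝ) ^ (2 - 2 * s) := by
          rw [show (1 - (2 * s - 1) : ℝ) = 2 - 2 * s by ring, hC]; ring
end

section
/- Let (X, d) be a separable metric space, let ν and m be finite Borel measures on X, let E ⊆ X be a Borel set, and let h > 0, c > 0, C > 0. Assume that for every z ∈ E and every δ > 0 there exists a radius r ∈ (0, δ) such that ν(closedBall(z, 4r)) ≤ C·r^h and m(closedBall(z, r)) ≥ c·r^h. Then there is a constant K depending only on the enlargement constant of the Vitali covering lemma such that ν(E) ≤ K·(C/c)·m(U) for every open set U containing E. -/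
open MeasureTheory Metric Set

/-- Covering comparison lemma: there is a universal constant `K > 0` (depending only on
the enlargement constant of the Vitali covering lemma) such that, for any separable
metric space `X`, finite Borel measures `ν`, `m` on `X`, Borel set `E ⊆ X` and reals
`h, c, C > 0`, if for every `z ∈ E` and every `δ > 0` there is `r ∈ (0, δ)` with
`ν(closedBall(z,4r)) ≤ C·r^h` and `m(closedBall(z,r)) ≥ c·r^h`, then
`ν(E) ≤ K·(C/c)·m(U)` for every open `U ⊇ E`. -/
theorem stmt_8 :
    ∃ K : ℝ, 0 < K ∧
      ∀ (X : Type) [MetricSpace X] [TopologicalSpace.SeparableSpace X]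
        [MeasurableSpace X] [BorelSpace X]
        (ν m : Measure X) [IsFiniteMeasure ν] [IsFiniteMeasure m]
        (E : Set X) (h c C : ℝ), MeasurableSet E → 0 < h → 0 < c → 0 < C →
        (∀ z ∈ E, ∀ δ : ℝ, 0 < δ → ∃ r : ℝ, r ∈ Set.Ioo 0 δ ∧
          ν (Metric.closedBall z (4 * r)) ≤ ENNReal.ofReal (C * r ^ h) ∧
          ENNReal.ofReal (c * r ^ h) ≤ m (Metric.closedBall z r)) →
        ∀ U : Set X, IsOpen U → E ⊆ U →
          ν E ≤ ENNReal.ofReal (K * (C / c)) * m U := by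
  refine ⟨1, one_pos, ?_⟩
  intro X _ _ _ _ ν m _ _ E h c C hE hh hc hC H U hU hEU
  -- choose radii
  have key : ∀ z : X, ∃ ρ : ℝ, z ∈ E → (0 < ρ ∧ ρ ≤ 1 ∧ closedBall z ρ ⊆ U ∧
      ν (closedBall z (4 * ρ)) ≤ ENNReal.ofReal (C * ρ ^ h) ∧
      ENNReal.ofReal (c * ρ ^ h) ≤ m (closedBall z ρ)) := by
    intro z
    by_cases hz : z ∈ E
    · obtain ⟨ε, hε, hball⟩ := Metric.isOpen_iff.1 hU z (hEU hz)
      obtain ⟨ρ, ⟨hρ0, hρδ⟩, hν, hm⟩ := H z hz (min 1 ε) (lt_min one_pos hε)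
      exact ⟨ρ, fun _ => ⟨hρ0, (hρδ.trans_le (min_le_left _ _)).le,
        (Metric.closedBall_subset_ball (hρδ.trans_le (min_le_right _ _))).trans hball,
        hν, hm⟩⟩
    · exact ⟨1, fun hz' => absurd hz' hz⟩
  choose r hr using key
  -- Vitali covering lemma with enlargement constant 3/2
  obtain ⟨u, huE, hdisj, hcov⟩ := Vitali.exists_disjoint_subfamily_covering_enlargement
    (fun z => closedBall z (r z)) E r (3/2) (by norm_num)
    (fun z hz => ((hr z hz).1).le) 1 (fun z hz => (hr z hz).2.1)
    (fun z hz => ⟨z, mem_closedBall_self ((hr z hz).1).le⟩)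
  -- u is countable since the disjoint balls have positive m-measure
  have hcount : u.Countable := by
    have hpair : Pairwise (Function.onFun Disjoint fun b : u => closedBall (b : X) (r b)) := by
      intro i j hij
      exact hdisj i.2 j.2 (Subtype.coe_injective.ne hij)
    have := MeasureTheory.Measure.countable_meas_pos_of_disjoint_iUnion
      (μ := m) (As := fun b : u => closedBall (b : X) (r b))
      (fun b => measurableSet_closedBall) hpair
    have huniv : {b : u | 0 < m (closedBall (b : X) (r b))} = Set.univ := by
      ext b
      simp only [Set.mem_setOf_eq, Set.mem_univ, iff_true]
      refine lt_of_lt_of_le ?_ (hr b (huE b.2)).2.2.2.2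
      have h1 : (0:ℝ) < c * (r b) ^ h :=
        mul_pos hc (Real.rpow_pos_of_pos (hr b (huE b.2)).1 h)
      exact ENNReal.ofReal_pos.2 h1
    rw [huniv] at this
    exact Set.countable_coe_iff.mp (Set.countable_univ_iff.mp this)
  -- E is covered by the 4-fold enlargements
  have cover : E ⊆ ⋃ b ∈ u, closedBall b (4 * r b) := by
    intro z hz
    obtain ⟨b, hbu, ⟨y, hy1, hy2⟩, hle⟩ := hcov z hz
    have hrb : 0 < r b := (hr b (huE hbu)).1
    refine Set.mem_biUnion hbu ?_
    have : dist z b ≤ r z + r b :=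
      (dist_triangle z y b).trans (add_le_add (dist_comm z y ▸ hy1) hy2)
    refine mem_closedBall.2 (this.trans ?_)
    nlinarith
  have hQ : (0:ℝ) ≤ C / c := (div_pos hC hc).le
  calc ν E ≤ ν (⋃ b ∈ u, closedBall b (4 * r b)) := measure_mono cover
    _ ≤ ∑' b : u, ν (closedBall b (4 * r b)) := measure_biUnion_le ν hcount _
    _ ≤ ∑' b : u, ENNReal.ofReal (C / c) * ENNReal.ofReal (c * r b ^ h) := by
        refine ENNReal.tsum_le_tsum fun b => ?_
        rw [← ENNReal.ofReal_mul hQ]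
        have : C / c * (c * r b ^ h) = C * r b ^ h := by
          field_simp
        rw [this]
        exact (hr b (huE b.2)).2.2.2.1
    _ = ENNReal.ofReal (C / c) * ∑' b : u, ENNReal.ofReal (c * r b ^ h) := by
        rw [ENNReal.tsum_mul_left]
    _ ≤ ENNReal.ofReal (C / c) * ∑' b : u, m (closedBall b (r b)) := by
        gcongr with b
        exact (hr b (huE b.2)).2.2.2.2
    _ = ENNReal.ofReal (C / c) * m (⋃ b ∈ u, closedBall b (r b)) := by
        rw [measure_biUnion hcount hdisj fun b _ => measurableSet_closedBall]
    _ ≤ ENNReal.ofReal (1 * (C / c)) * m U := by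
        rw [one_mul]
        gcongr
        exact Set.iUnion₂_subset fun b hb => (hr b (huE hb)).2.2.1
end

section
/- Let (X, F, μ) be a σ-finite measure space and T : X → X a conservative, measure-preserving transformation. Let (Γ_n)_{n≥0} be a sequence of pairwise disjoint measurable sets with μ(Γ_0) < ∞ and Γ_{n+1} ⊆ T^{-1}(Γ_n) for every n ≥ 0. Then the sequence (μ(Γ_n))_{n≥0} is non-increasing and lim_{n→∞} μ(Γ_n) = 0. -/
open MeasureTheory Filter

/-- Let `(X,F,μ)` be a σ-finite measure space and `T : X → X` a conservative,
measure-preserving transformation.  If `(Γ_n)` are pairwise disjoint measurable sets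
with `μ(Γ_0) < ∞` and `Γ_{n+1} ⊆ T⁻¹(Γ_n)` for all `n`, then `(μ(Γ_n))` is
non-increasing and tends to `0`. -/
theorem stmt_12 {X : Type*} [MeasurableSpace X] (μ : Measure X) [SigmaFinite μ]
    (T : X → X) (hcons : MeasureTheory.Conservative T μ)
    (hpres : MeasureTheory.MeasurePreserving T μ μ)
    (Γ : ℕ → Set X) (hmeas : ∀ n, MeasurableSet (Γ n))
    (hdisj : Pairwise (Function.onFun Disjoint Γ))
    (hfin : μ (Γ 0) < ⊤) (hsub : ∀ n : ℕ, Γ (n + 1) ⊆ T ⁻¹' (Γ n)) :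
    Antitone (fun n : ℕ => μ (Γ n)) ∧
      Filter.Tendsto (fun n : ℕ => μ (Γ n)) Filter.atTop (nhds 0) := by
  have hT : Measurable T := hpres.measurable
  have hmono : Antitone fun n : ℕ => μ (Γ n) := by
    apply antitone_nat_of_succ_le
    intro n
    calc μ (Γ (n + 1)) ≤ μ (T ⁻¹' Γ n) := measure_mono (hsub n)
      _ = μ (Γ n) := hpres.measure_preimage (hmeas n).nullMeasurableSet
  refine ⟨hmono, ?_⟩
  -- The "first hitting time of Γ 0 is N" sets
  set E : ℕ → Set X := fun N => {x | T^[N] x ∈ Γ 0 ∧ ∀ k < N, T^[k] x ∉ Γ 0} with hEdef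
  have hEmeas : ∀ N, MeasurableSet (E N) := by
    intro N
    have h1 : MeasurableSet {x | T^[N] x ∈ Γ 0} := (hT.iterate N) (hmeas 0)
    have h2 : MeasurableSet {x | ∀ k < N, T^[k] x ∉ Γ 0} := by
      have : {x | ∀ k < N, T^[k] x ∉ Γ 0} = ⋂ k < N, (T^[k] ⁻¹' Γ 0)ᶜ := by
        ext x; simp [Set.mem_iInter]
      rw [this]
      exact MeasurableSet.biInter (Set.to_countable _)
        fun k _ => ((hT.iterate k) (hmeas 0)).compl
    exact h1.inter h2
  have hE0 : E 0 = Γ 0 := by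
    ext x; simp [hEdef]
  have hEsucc : ∀ N, E (N + 1) = T ⁻¹' (E N) \ Γ 0 := by
    intro N
    ext x
    simp only [hEdef, Set.mem_setOf_eq, Set.mem_diff, Set.mem_preimage,
      Function.iterate_succ_apply]
    constructor
    · rintro ⟨h1, h2⟩
      refine ⟨⟨h1, fun k hk => h2 (k + 1) (by omega)⟩, h2 0 (by omega)⟩
    · rintro ⟨⟨h1, h2⟩, h3⟩
      refine ⟨h1, fun k hk => ?_⟩
      cases k with
      | zero => simpa using h3
      | succ j => exact h2 j (by omega)
  -- Γ N ⊆ E N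
  have hiter : ∀ k n, Γ (n + k) ⊆ T^[k] ⁻¹' (Γ n) := by
    intro k
    induction k with
    | zero => intro n; simp
    | succ j ih =>
      intro n x hx
      have h1 : T x ∈ Γ (n + j) := hsub (n + j) hx
      have h2 : T^[j] (T x) ∈ Γ n := ih n h1
      show T^[j + 1] x ∈ Γ n
      rw [Function.iterate_succ_apply]
      exact h2
  have hGE : ∀ N, Γ N ⊆ E N := by
    intro N x hx
    constructor
    · have := hiter N 0 (by simpa using hx)
      simpa using this
    · intro k hk hmem
      have h1 : T^[k] x ∈ Γ (N - k) := by
        have := hiter k (N - k) (by rw [Nat.sub_add_cancel hk.le]; exact hx)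
        simpa using this
      exact (hdisj (i := N - k) (j := 0) (by omega)).le_bot ⟨h1, hmem⟩
  -- first return sets
  set F : ℕ → Set X := fun N => T ⁻¹' (E N) ∩ Γ 0 with hFdef
  have hFmeas : ∀ N, MeasurableSet (F N) := fun N => ((hT (hEmeas N)).inter (hmeas 0))
  have hrec : ∀ N, μ (E N) = μ (E (N + 1)) + μ (F N) := by
    intro N
    rw [← hpres.measure_preimage (hEmeas N).nullMeasurableSet,
      ← measure_diff_add_inter (T ⁻¹' E N) (hmeas 0), ← hEsucc N]
  have hsum : ∀ N, μ (E N) + ∑ k ∈ Finset.range N, μ (F k) = μ (Γ 0) := by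
    intro N
    induction N with
    | zero => simp [hE0]
    | succ n ih =>
      rw [Finset.sum_range_succ, ← ih, hrec n]; ring
  -- the F N are pairwise disjoint
  have hFdisj : Pairwise (Function.onFun Disjoint F) := by
    have key : ∀ N M, N < M → ∀ x, x ∈ F N → x ∈ F M → False := by
      intro N M hNM x hN hM
      have h1 : T^[N + 1] x ∈ Γ 0 := by
        have := hN.1.1
        simpa [Function.iterate_succ_apply] using this
      have h2 : T^[N] (T x) ∉ Γ 0 := hM.1.2 N hNM
      exact h2 (by simpa [Function.iterate_succ_apply] using h1)
    intro N M hNM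
    rcases lt_or_gt_of_ne hNM with h | h
    · exact Set.disjoint_left.2 fun x hx hx' => key N M h x hx hx'
    · exact Set.disjoint_left.2 fun x hx hx' => key M N h x hx' hx
  -- a.e. every point of Γ 0 lies in some F N
  have hcover : ∀ᵐ x ∂μ, x ∈ Γ 0 → x ∈ ⋃ N, F N := by
    filter_upwards [hcons.ae_mem_imp_frequently_image_mem (hmeas 0).nullMeasurableSet]
      with x hx hx0
    have hfreq := hx hx0
    have hex : ∃ n, 0 < n ∧ T^[n] x ∈ Γ 0 := by
      rcases (frequently_atTop.1 hfreq 1) with ⟨n, hn1, hn2⟩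
      exact ⟨n, by omega, hn2⟩
    classical
    set n0 := Nat.find hex with hn0
    obtain ⟨hn0pos, hn0mem⟩ := Nat.find_spec hex
    refine Set.mem_iUnion.2 ⟨n0 - 1, ?_, hx0⟩
    refine ⟨?_, ?_⟩
    · show T^[n0 - 1] (T x) ∈ Γ 0
      have h : T^[n0 - 1 + 1] x ∈ Γ 0 := by
        rw [show n0 - 1 + 1 = n0 by omega]; exact hn0mem
      rw [Function.iterate_succ_apply] at h
      exact h
    · intro k hk hmem
      have hk1 : k + 1 < n0 := by omega
      exact Nat.find_min hex hk1 ⟨by omega, by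
        simpa [Function.iterate_succ_apply] using hmem⟩
  have hUnion : μ (⋃ N, F N) = μ (Γ 0) := by
    apply le_antisymm
    · exact measure_mono (Set.iUnion_subset fun N => Set.inter_subset_right)
    · exact measure_mono_ae (hcover.mono fun x h hx => h hx)
  have htsum : ∑' N, μ (F N) = μ (Γ 0) := by
    rw [← measure_iUnion hFdisj hFmeas, hUnion]
  have hS : Tendsto (fun N => ∑ k ∈ Finset.range N, μ (F k)) atTop (nhds (μ (Γ 0))) := by
    rw [← htsum]; exact ENNReal.tendsto_nat_tsum _
  have hEle : ∀ N, μ (E N) ≤ μ (Γ 0) := fun N => le_trans le_self_add (le_of_eq (hsum N))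
  -- μ (E N) → 0
  have hE0tend : Tendsto (fun N => μ (E N)) atTop (nhds 0) := by
    rw [ENNReal.tendsto_nhds_zero]
    intro ε hε
    by_cases hC : μ (Γ 0) ≤ ε
    · exact Filter.Eventually.of_forall fun N => (hEle N).trans hC
    · push_neg at hC
      have hCne : μ (Γ 0) ≠ ⊤ := hfin.ne
      have hlt : μ (Γ 0) - ε < μ (Γ 0) :=
        ENNReal.sub_lt_self hCne (hε.trans hC).ne' hε.ne'
      filter_upwards [hS.eventually (eventually_gt_nhds hlt)] with N hN
      have h1 : μ (Γ 0) - ε ≤ ∑ k ∈ Finset.range N, μ (F k) := hN.le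
      have h2 : μ (Γ 0) ≤ ∑ k ∈ Finset.range N, μ (F k) + ε := by
        exact tsub_le_iff_right.1 h1
      have h3 : μ (E N) = μ (Γ 0) - ∑ k ∈ Finset.range N, μ (F k) :=
        ENNReal.eq_sub_of_add_eq (ne_top_of_le_ne_top hCne
          (le_trans le_add_self (le_of_eq (hsum N)))) (hsum N)
      rw [h3]
      exact tsub_le_iff_right.2 (h2.trans (le_of_eq (add_comm _ _)))
  exact tendsto_of_tendsto_of_tendsto_of_le_of_le tendsto_const_nhds hE0tend
    (fun n => zero_le) (fun n => measure_mono (hGE n))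
end

section
/- Let (X, F, μ) be a σ-finite measure space and T : X → X a conservative, measure-preserving transformation. Let (Γ_n)_{n≥0} be a sequence of pairwise disjoint measurable sets with μ(Γ_0) < ∞ and Γ_{n+1} ⊆ T^{-1}(Γ_n) for every n ≥ 0. Then, with equality in [0, ∞], μ( ⋃_{N≥0} Γ_N ) = Σ_{n=0}^∞ (n+1) · μ( T^{-1}(Γ_n) \ Γ_{n+1} ). -/
open MeasureTheory ENNReal

lemma tele_aux (f : ℕ → ℝ≥0∞) (hdec : ∀ n, f (n + 1) ≤ f n) (hfin : ∀ n, f n ≠ ∞)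
    (h0 : ⨅ n, f n = 0) : ∑' n, (f n - f (n + 1)) = f 0 := by
  have hpart : ∀ N, ∑ n ∈ Finset.range N, (f n - f (n + 1)) + f N = f 0 := by
    intro N
    induction N with
    | zero => simp
    | succ N ih =>
      rw [Finset.sum_range_succ, add_assoc, tsub_add_cancel_of_le (hdec N)]
      exact ih
  have hps : ∀ N, ∑ n ∈ Finset.range N, (f n - f (n + 1)) = f 0 - f N := by
    intro N
    exact ENNReal.eq_sub_of_add_eq (hfin N) (hpart N)
  rw [ENNReal.tsum_eq_iSup_nat]
  simp_rw [hps]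
  rw [← ENNReal.sub_iInf, h0, tsub_zero]

/-- Let `(X,F,μ)` be a σ-finite measure space and `T : X → X` a conservative,
measure-preserving transformation.  If `(Γ_n)` are pairwise disjoint measurable sets
with `μ(Γ_0) < ∞` and `Γ_{n+1} ⊆ T⁻¹(Γ_n)` for all `n`, then, with equality in
`[0,∞]`, `μ(⋃_N Γ_N) = Σ_{n=0}^∞ (n+1)·μ(T⁻¹(Γ_n) \ Γ_{n+1})`. -/
theorem stmt_13 {X : Type*} [MeasurableSpace X] (μ : Measure X) [SigmaFinite μ]
    (T : X → X) (hcons : MeasureTheory.Conservative T μ)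
    (hpres : MeasureTheory.MeasurePreserving T μ μ)
    (Γ : ℕ → Set X) (hmeas : ∀ n, MeasurableSet (Γ n))
    (hdisj : Pairwise (Function.onFun Disjoint Γ))
    (hfin : μ (Γ 0) < ⊤) (hsub : ∀ n : ℕ, Γ (n + 1) ⊆ T ⁻¹' (Γ n)) :
    μ (⋃ N : ℕ, Γ N) = ∑' n : ℕ, ((n : ℝ≥0∞) + 1) * μ (T ⁻¹' (Γ n) \ Γ (n + 1)) := by
  classical
  set A := Γ 0 with hA
  have hTm : Measurable T := hpres.measurable
  have hAm : MeasurableSet A := hmeas 0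
  set a : ℕ → ℝ≥0∞ := fun n => μ (Γ n) with ha
  have hadec : ∀ n, a (n + 1) ≤ a n := fun n =>
    (measure_mono (hsub n)).trans
      (le_of_eq (hpres.measure_preimage (hmeas n).nullMeasurableSet))
  have haanti : Antitone a := antitone_nat_of_succ_le hadec
  have hafin : ∀ n, a n ≠ ∞ := fun n => ((haanti (Nat.zero_le n)).trans_lt hfin).ne
  -- the orbit of a point of `Γ (n + j)` passes through `Γ n` after `j` steps
  have hΓiter : ∀ j n, ∀ x, x ∈ Γ (n + j) → T^[j] x ∈ Γ n := by
    intro j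
    induction j with
    | zero => intro n x hx; simpa using hx
    | succ j ih =>
      intro n x hx
      have h1 : T x ∈ Γ (n + j) := hsub (n + j) hx
      simpa [Function.iterate_succ_apply] using ih n (T x) h1
  -- first entrance sets
  set F : ℕ → Set X :=
    fun n => T^[n] ⁻¹' A \ ⋃ j, ⋃ (_ : j < n), T^[j] ⁻¹' A with hF
  have hFm : ∀ n, MeasurableSet (F n) := fun n =>
    ((hTm.iterate n) hAm).diff
      (MeasurableSet.iUnion fun j => MeasurableSet.iUnion fun _ => (hTm.iterate j) hAm)
  have hFmem : ∀ n x, x ∈ F n ↔ T^[n] x ∈ A ∧ ∀ j < n, T^[j] x ∉ A := by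
    intro n x
    simp [hF, Set.mem_iUnion, not_exists]
  have hΓF : ∀ n, Γ n ⊆ F n := by
    intro n x hx
    rw [hFmem]
    constructor
    · exact hΓiter n 0 x (by simpa using hx)
    · intro j hj hxA
      have h1 : T^[j] x ∈ Γ (n - j) := hΓiter j (n - j) x (by rwa [Nat.sub_add_cancel hj.le])
      have hne : n - j ≠ 0 := Nat.sub_ne_zero_of_lt hj
      exact Set.disjoint_left.mp (hdisj hne) h1 hxA
  have hFrec : ∀ n, F (n + 1) = T ⁻¹' (F n) \ A := by
    intro n
    ext x
    simp only [Set.mem_diff, Set.mem_preimage, hFmem]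
    constructor
    · rintro ⟨h1, h2⟩
      refine ⟨⟨by rwa [← Function.iterate_succ_apply], fun j hj => ?_⟩, h2 0 (Nat.succ_pos n)⟩
      rw [← Function.iterate_succ_apply]
      exact h2 (j + 1) (Nat.succ_lt_succ hj)
    · rintro ⟨⟨h1, h2⟩, h3⟩
      refine ⟨by rwa [Function.iterate_succ_apply], fun j hj => ?_⟩
      cases j with
      | zero => simpa using h3
      | succ j =>
        rw [Function.iterate_succ_apply]
        exact h2 j (Nat.lt_of_succ_lt_succ hj)
  -- return-time decomposition
  set D : ℕ → Set X := fun n => T ⁻¹' (F n) ∩ A with hD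
  have hDm : ∀ n, MeasurableSet (D n) := fun n => (hTm (hFm n)).inter hAm
  have hDmem : ∀ n x, x ∈ D n ↔
      (T^[n + 1] x ∈ A ∧ ∀ j, 0 < j → j < n + 1 → T^[j] x ∉ A) ∧ x ∈ A := by
    intro n x
    rw [hD]
    simp only [Set.mem_inter_iff, Set.mem_preimage, hFmem]
    constructor
    · rintro ⟨⟨h1, h2⟩, h3⟩
      refine ⟨⟨by rwa [Function.iterate_succ_apply], fun j hj hjn => ?_⟩, h3⟩
      obtain ⟨j, rfl⟩ := Nat.exists_eq_add_of_lt hj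
      rw [Nat.zero_add] at hjn ⊢
      rw [Function.iterate_succ_apply]
      exact h2 j (Nat.lt_of_succ_lt_succ hjn)
    · rintro ⟨⟨h1, h2⟩, h3⟩
      refine ⟨⟨by rwa [← Function.iterate_succ_apply], fun j hj => ?_⟩, h3⟩
      rw [← Function.iterate_succ_apply]
      exact h2 (j + 1) (Nat.succ_pos j) (Nat.succ_lt_succ hj)
  have hDkey : ∀ n m, n < m → Disjoint (D n) (D m) := by
    intro n m hlt
    rw [Set.disjoint_left]
    intro x hxn hxm
    have h1 := ((hDmem n x).mp hxn).1.1
    exact ((hDmem m x).mp hxm).1.2 (n + 1) (Nat.succ_pos n) (by omega) h1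
  have hDdisj : Pairwise (Function.onFun Disjoint D) := by
    intro n m hnm
    rcases lt_or_gt_of_ne hnm with h | h
    · exact hDkey n m h
    · exact (hDkey m n h).symm
  have hDsubA : ∀ n, D n ⊆ A := fun n x hx => ((hDmem n x).mp hx).2
  -- Poincaré recurrence: a.e. point of A returns
  have hN0 : μ {x ∈ A | ∀ m ≥ 1, T^[m] x ∉ A} = 0 :=
    hcons.measure_mem_forall_ge_image_notMem_eq_zero hAm.nullMeasurableSet 1
  have hAcover : A ⊆ (⋃ n, D n) ∪ {x ∈ A | ∀ m ≥ 1, T^[m] x ∉ A} := by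
    intro x hx
    by_cases hret : ∃ m, 1 ≤ m ∧ T^[m] x ∈ A
    · left
      have hex : ∃ m, 0 < m ∧ T^[m] x ∈ A := by
        obtain ⟨m, hm1, hm2⟩ := hret; exact ⟨m, hm1, hm2⟩
      set k := Nat.find hex with hk
      obtain ⟨hk0, hkA⟩ := Nat.find_spec hex
      refine Set.mem_iUnion.mpr ⟨k - 1, (hDmem _ x).mpr ⟨⟨?_, ?_⟩, hx⟩⟩
      · rwa [Nat.sub_add_cancel hk0]
      · intro j hj hjk
        intro hxj
        exact Nat.find_min hex (by omega) ⟨hj, hxj⟩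
    · right
      exact ⟨hx, fun m hm hmA => hret ⟨m, hm, hmA⟩⟩
  have hDsum : ∑' n, μ (D n) = μ A := by
    rw [← measure_iUnion hDdisj hDm]
    refine le_antisymm (measure_mono (Set.iUnion_subset hDsubA)) ?_
    calc μ A ≤ μ ((⋃ n, D n) ∪ {x ∈ A | ∀ m ≥ 1, T^[m] x ∉ A}) := measure_mono hAcover
      _ ≤ μ (⋃ n, D n) + μ {x ∈ A | ∀ m ≥ 1, T^[m] x ∉ A} := measure_union_le _ _
      _ = μ (⋃ n, D n) := by rw [hN0, add_zero]
  -- μ (F n) recursion and limit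
  have hsplit : ∀ n, μ (D n) + μ (F (n + 1)) = μ (F n) := by
    intro n
    have h1 : μ (T ⁻¹' (F n) ∩ A) + μ (T ⁻¹' (F n) \ A) = μ (T ⁻¹' (F n)) :=
      measure_inter_add_diff _ hAm
    have h2 : μ (T ⁻¹' (F n)) = μ (F n) :=
      hpres.measure_preimage (hFm n).nullMeasurableSet
    rw [hFrec n]
    show μ (T ⁻¹' (F n) ∩ A) + μ (T ⁻¹' (F n) \ A) = μ (F n)
    rw [h1, h2]
  have hFsum : ∀ N, μ (F N) + ∑ k ∈ Finset.range N, μ (D k) = μ A := by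
    intro N
    induction N with
    | zero =>
      have : F 0 = A := by
        ext x; rw [hFmem]; simp
      simp [this]
    | succ N ih =>
      calc μ (F (N + 1)) + ∑ k ∈ Finset.range (N + 1), μ (D k)
          = (μ (D N) + μ (F (N + 1))) + ∑ k ∈ Finset.range N, μ (D k) := by
            rw [Finset.sum_range_succ]; ring
        _ = μ (F N) + ∑ k ∈ Finset.range N, μ (D k) := by rw [hsplit N]
        _ = μ A := ih
  have hSfin : ∀ N, ∑ k ∈ Finset.range N, μ (D k) ≠ ∞ := by
    intro N
    have h := hFsum N
    have : ∑ k ∈ Finset.range N, μ (D k) ≤ μ A := le_add_self.trans h.le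
    exact (this.trans_lt hfin).ne
  have hFval : ∀ N, μ (F N) = μ A - ∑ k ∈ Finset.range N, μ (D k) := fun N =>
    ENNReal.eq_sub_of_add_eq (hSfin N) (hFsum N)
  have h0 : ⨅ n, a n = 0 := by
    refine le_antisymm ?_ (zero_le)
    have h1 : ⨅ n, a n ≤ ⨅ n, μ (F n) :=
      le_iInf fun n => iInf_le_of_le n (measure_mono (hΓF n))
    refine h1.trans ?_
    simp_rw [hFval]
    rw [← ENNReal.sub_iSup hfin.ne, ← ENNReal.tsum_eq_iSup_nat, hDsum, tsub_self]
  -- translate the RHS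
  have hd : ∀ n, μ (T ⁻¹' (Γ n) \ Γ (n + 1)) = a n - a (n + 1) := by
    intro n
    rw [measure_diff (hsub n) (hmeas (n + 1)).nullMeasurableSet (hafin (n + 1)),
      hpres.measure_preimage (hmeas n).nullMeasurableSet]
  -- tail sums
  have htail : ∀ k, ∑' m, (a (m + k) - a (m + k + 1)) = a k := by
    intro k
    have h0k : ⨅ m, a (m + k) = 0 := by
      refine le_antisymm ?_ (zero_le)
      calc ⨅ m, a (m + k) ≤ ⨅ n, a n :=
            le_iInf fun n => iInf_le_of_le n (haanti (Nat.le_add_right n k))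
        _ = 0 := h0
    have := tele_aux (fun m => a (m + k))
      (fun m => by simpa [Nat.add_right_comm] using hadec (m + k))
      (fun m => hafin _) h0k
    simpa [Nat.add_right_comm] using this
  -- rearrange the double sum
  have hswap : ∑' n : ℕ, ((n : ℝ≥0∞) + 1) * (a n - a (n + 1)) = ∑' k, a k := by
    have step1 : ∀ n : ℕ, ((n : ℝ≥0∞) + 1) * (a n - a (n + 1)) =
        ∑' k : ℕ, (if k ≤ n then a n - a (n + 1) else 0) := by
      intro n
      rw [tsum_eq_sum (s := Finset.range (n + 1))
        (fun k hk => if_neg (fun h => hk (Finset.mem_range.mpr (Nat.lt_succ_of_le h))))]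
      rw [Finset.sum_congr rfl
        (fun k hk => if_pos (Nat.lt_succ_iff.mp (Finset.mem_range.mp hk)))]
      rw [Finset.sum_const, Finset.card_range, nsmul_eq_mul]
      push_cast
      ring
    simp_rw [step1]
    rw [ENNReal.tsum_comm]
    refine tsum_congr fun k => ?_
    have hinj : Function.Injective (fun m : ℕ => m + k) := fun m₁ m₂ h => by
      dsimp only at h; omega
    have hsupp : Function.support (fun n : ℕ => if k ≤ n then a n - a (n + 1) else 0) ⊆
        Set.range (fun m : ℕ => m + k) := by
      intro n hn
      by_cases h : k ≤ n
      · exact ⟨n - k, by dsimp only; omega⟩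
      · simp [if_neg h] at hn
    calc ∑' n : ℕ, (if k ≤ n then a n - a (n + 1) else 0)
        = ∑' m : ℕ, (if k ≤ m + k then a (m + k) - a (m + k + 1) else 0) :=
          (hinj.tsum_eq hsupp).symm
      _ = ∑' m : ℕ, (a (m + k) - a (m + k + 1)) := by
          refine tsum_congr fun m => if_pos (Nat.le_add_left k m)
      _ = a k := htail k
  rw [measure_iUnion hdisj hmeas]
  simp_rw [hd]
  exact hswap.symm
end
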